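/- The map γ ↦ σ_γ, where σ_γ(i) = i + l_i/2 − h_i, is a bijection from the set of Dyck paths of length 2n onto the set of 231-avoiding permutations of [n]. -/

import Mathlib

/-- A Dyck path of length `2n`, as a function `ℕ → ℤ`. -/
def IsDyckPathFn (n : ℕ) (γ : ℕ → ℤ) : Prop :=
  γ 0 = 0 ∧ γ (2 * n) = 0 ∧ (∀ x, x ≤ 2 * n → 0 ≤ γ x) ∧
    (∀ x, x < 2 * n → γ (x + 1) = γ x + 1 ∨ γ (x + 1) = γ x - 1)

/-- The sorted list of positions in `[1, 2n]` reached by an up-step of `γ`. -/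
def upPositions (n : ℕ) (γ : ℕ → ℤ) : List ℕ :=
  ((Finset.Icc 1 (2 * n)).filter (fun x => γ x = γ (x - 1) + 1)).sort (· ≤ ·)

/-- `vPos n γ i` is the position just after the `i`-th up-step of `γ`. -/
def vPos (n : ℕ) (γ : ℕ → ℤ) (i : ℕ) : ℕ := (upPositions n γ).getD (i - 1) 0

/-- The height of `γ` just after its `i`-th up-step. -/
def hgt (n : ℕ) (γ : ℕ → ℤ) (i : ℕ) : ℤ := γ (vPos n γ i)

/-- The length of the excursion of `γ` started by its `i`-th up-step: the least
`l ≥ 1` with `γ (vPos i - 1 + l) = hgt i - 1`. -/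
noncomputable def excLen (n : ℕ) (γ : ℕ → ℤ) (i : ℕ) : ℕ :=
  sInf {l : ℕ | 1 ≤ l ∧ γ (vPos n γ i - 1 + l) = hgt n γ i - 1}

/-- The 231-avoiding permutation associated to a Dyck path:
`σ_γ i = i + l_i / 2 - h_i`. -/
noncomputable def perm231 (n : ℕ) (γ : ℕ → ℤ) (i : ℕ) : ℤ :=
  (i : ℤ) + ((excLen n γ i / 2 : ℕ) : ℤ) - hgt n γ i

/-- Dyck paths of length `2n` (pinned to zero beyond `2n`). -/
def DyckSet (n : ℕ) : Set (ℕ → ℤ) :=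
  {γ | IsDyckPathFn n γ ∧ ∀ x, 2 * n ≤ x → γ x = 0}

/-- 231-avoiding permutations of `[n]`, encoded as functions `ℕ → ℤ` that map
`{1,…,n}` bijectively onto `{1,…,n}`, vanish elsewhere, and avoid the pattern
231. -/
def Avoid231Set (n : ℕ) : Set (ℕ → ℤ) :=
  {f | Set.BijOn f (Set.Icc 1 n) (Set.Icc (1 : ℤ) (n : ℤ)) ∧
    (∀ i, i ∉ Set.Icc 1 n → f i = 0) ∧
    ¬ ∃ i j k, i ∈ Set.Icc 1 n ∧ j ∈ Set.Icc 1 n ∧ k ∈ Set.Icc 1 n ∧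
      i < j ∧ j < k ∧ f k < f i ∧ f i < f j}

-- up-step counting identity
lemma upcount {n : ℕ} {γ : ℕ → ℤ} (hγ : IsDyckPathFn n γ) :
    ∀ x, x ≤ 2 * n →
      2 * (((Finset.Icc 1 x).filter (fun y => γ y = γ (y - 1) + 1)).card : ℤ) = x + γ x := by
  intro x
  induction x with
  | zero => intro _; simp [hγ.1]
  | succ x ih =>
    intro hx
    have hstep := hγ.2.2.2 x (by omega)
    have ihx := ih (by omega)
    have hIcc : Finset.Icc 1 (x + 1) = insert (x + 1) (Finset.Icc 1 x) :=
      (Finset.insert_Icc_right_eq_Icc_add_one (by omega)).symm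
    rw [hIcc, Finset.filter_insert]
    have hnm : (x + 1) ∉ (Finset.Icc 1 x).filter (fun y => γ y = γ (y - 1) + 1) := by
      simp [Finset.mem_Icc]
    rcases hstep with h | h
    · rw [if_pos (by simpa using h), Finset.card_insert_of_notMem hnm]
      push_cast
      push_cast at ihx
      omega
    · rw [if_neg (by simpa using (by omega : ¬ γ (x+1) = γ x + 1))]
      push_cast
      push_cast at ihx
      omega

lemma card_upSet {n : ℕ} {γ : ℕ → ℤ} (hγ : IsDyckPathFn n γ) :
    ((Finset.Icc 1 (2 * n)).filter (fun y => γ y = γ (y - 1) + 1)).card = n := by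
  have := upcount hγ (2 * n) le_rfl
  rw [hγ.2.1] at this
  push_cast at this
  omega

lemma sorted_filter_length :
    ∀ (L : List ℕ), L.Pairwise (· < ·) → ∀ j : ℕ, j < L.length →
      (L.filter (fun w => w ≤ L.getD j 0)).length = j + 1 := by
  intro L
  induction L with
  | nil => intro _ j hj; simp at hj
  | cons a t ih =>
    intro h j hj
    have hat : ∀ b ∈ t, a < b := (List.pairwise_cons.mp h).1
    have ht : t.Pairwise (· < ·) := (List.pairwise_cons.mp h).2
    cases j with
    | zero =>
      simp only [List.getD_cons_zero, List.filter_cons]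
      rw [if_pos (by simp)]
      have : t.filter (fun w => w ≤ a) = [] := by
        apply List.filter_eq_nil_iff.mpr
        intro b hb
        simpa using Nat.not_le.mpr (hat b hb)
      simp [this]
    | succ j =>
      simp only [List.getD_cons_succ, List.filter_cons]
      have hjt : j < t.length := by simpa using hj
      have hc : t.getD j 0 ∈ t := by
        rw [List.getD_eq_getElem _ _ hjt]; exact List.getElem_mem _
      rw [if_pos (by simpa using (hat _ hc).le)]
      have h2 := ih ht j hjt
      simp only [List.getD_eq_getElem?_getD] at h2 ⊢
      simp [h2]

lemma vPos_spec {n : ℕ} {γ : ℕ → ℤ} (hγ : IsDyckPathFn n γ) {i : ℕ} (hi1 : 1 ≤ i) (hin : i ≤ n) :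
    (1 ≤ vPos n γ i ∧ vPos n γ i ≤ 2 * n) ∧ γ (vPos n γ i) = γ (vPos n γ i - 1) + 1 ∧
      (vPos n γ i : ℤ) + γ (vPos n γ i) = 2 * i := by
  classical
  set s := (Finset.Icc 1 (2 * n)).filter (fun y => γ y = γ (y - 1) + 1) with hs
  have hcard : s.card = n := card_upSet hγ
  have hlen : (upPositions n γ).length = n := by
    rw [upPositions, Finset.length_sort, ← hs, hcard]
  have hj : i - 1 < (upPositions n γ).length := by omega
  set L := upPositions n γ with hL
  set v := vPos n γ i with hv
  have hvL : v ∈ L := by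
    rw [hv, vPos, ← hL, List.getD_eq_getElem _ _ hj]; exact List.getElem_mem _
  have hvs : v ∈ s := by
    rw [← Finset.mem_sort (α := ℕ) (· ≤ ·)]; exact hvL
  have hmem := Finset.mem_filter.mp hvs
  have hIcc := Finset.mem_Icc.mp hmem.1
  refine ⟨⟨hIcc.1, hIcc.2⟩, hmem.2, ?_⟩
  have hflt : (L.filter (fun w => w ≤ v)).length = i := by
    have h1 := sorted_filter_length L (Finset.sortedLT_sort s).pairwise (i - 1) hj
    have : L.getD (i - 1) 0 = v := rfl
    rw [this] at h1
    rw [h1]; omega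
  have hnd : L.Nodup := Finset.sort_nodup s _
  have hndf : (L.filter (fun w => w ≤ v)).Nodup := hnd.filter _
  have htf : (L.filter (fun w => w ≤ v)).toFinset
      = (Finset.Icc 1 v).filter (fun y => γ y = γ (y - 1) + 1) := by
    ext w
    simp only [List.mem_toFinset, List.mem_filter, Finset.mem_filter, Finset.mem_Icc]
    constructor
    · rintro ⟨hwL, hwv⟩
      have hws : w ∈ s := by rw [← Finset.mem_sort (α := ℕ) (· ≤ ·)]; exact hwL
      have := Finset.mem_filter.mp hws
      have h2 := Finset.mem_Icc.mp this.1
      refine ⟨⟨h2.1, by simpa using hwv⟩, this.2⟩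
    · rintro ⟨⟨hw1, hwv⟩, hup⟩
      have hws : w ∈ s := Finset.mem_filter.mpr ⟨Finset.mem_Icc.mpr ⟨hw1, le_trans hwv hIcc.2⟩, hup⟩
      exact ⟨(Finset.mem_sort (α := ℕ) (· ≤ ·)).mpr hws, by simpa using hwv⟩
  have hcards : ((Finset.Icc 1 v).filter (fun y => γ y = γ (y - 1) + 1)).card = i := by
    rw [← htf, List.toFinset_card_of_nodup hndf, hflt]
  have hup := upcount hγ v hIcc.2
  rw [hcards] at hup
  linarith

lemma count_eq_of_val {n : ℕ} {γ : ℕ → ℤ} (hγ : IsDyckPathFn n γ) {v i : ℕ}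
    (hv : v ≤ 2 * n) (hval : (v : ℤ) + γ v = 2 * i) :
    ((Finset.Icc 1 v).filter (fun y => γ y = γ (y - 1) + 1)).card = i := by
  have := upcount hγ v hv
  omega

lemma vPos_eq {n : ℕ} {γ : ℕ → ℤ} (hγ : IsDyckPathFn n γ) {i v : ℕ}
    (hi1 : 1 ≤ i) (hin : i ≤ n) (hv1 : 1 ≤ v) (hv2 : v ≤ 2 * n)
    (hup : γ v = γ (v - 1) + 1) (hval : (v : ℤ) + γ v = 2 * i) :
    vPos n γ i = v := by
  classical
  obtain ⟨⟨hw1, hw2⟩, hupw, hvalw⟩ := vPos_spec hγ hi1 hin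
  set w := vPos n γ i with hwdef
  have hcw : ((Finset.Icc 1 w).filter (fun y => γ y = γ (y - 1) + 1)).card = i :=
    count_eq_of_val hγ hw2 hvalw
  have hcv : ((Finset.Icc 1 v).filter (fun y => γ y = γ (y - 1) + 1)).card = i :=
    count_eq_of_val hγ hv2 hval
  by_contra hne
  rcases Nat.lt_or_ge w v with hlt | hge
  · -- w < v : insert v into the w-filter
    have hsub : insert v ((Finset.Icc 1 w).filter (fun y => γ y = γ (y - 1) + 1))
        ⊆ (Finset.Icc 1 v).filter (fun y => γ y = γ (y - 1) + 1) := by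
      intro x hx
      rcases Finset.mem_insert.mp hx with rfl | hx
      · exact Finset.mem_filter.mpr ⟨Finset.mem_Icc.mpr ⟨hv1, le_rfl⟩, hup⟩
      · have := Finset.mem_filter.mp hx
        have h2 := Finset.mem_Icc.mp this.1
        exact Finset.mem_filter.mpr ⟨Finset.mem_Icc.mpr ⟨h2.1, by omega⟩, this.2⟩
    have hnm : v ∉ (Finset.Icc 1 w).filter (fun y => γ y = γ (y - 1) + 1) := by
      simp only [Finset.mem_filter, Finset.mem_Icc]
      rintro ⟨⟨_, h⟩, _⟩; omega
    have := Finset.card_le_card hsub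
    rw [Finset.card_insert_of_notMem hnm, hcw, hcv] at this
    omega
  · have hlt : v < w := by omega
    have hsub : insert w ((Finset.Icc 1 v).filter (fun y => γ y = γ (y - 1) + 1))
        ⊆ (Finset.Icc 1 w).filter (fun y => γ y = γ (y - 1) + 1) := by
      intro x hx
      rcases Finset.mem_insert.mp hx with rfl | hx
      · exact Finset.mem_filter.mpr ⟨Finset.mem_Icc.mpr ⟨hw1, le_rfl⟩, hupw⟩
      · have := Finset.mem_filter.mp hx
        have h2 := Finset.mem_Icc.mp this.1
        exact Finset.mem_filter.mpr ⟨Finset.mem_Icc.mpr ⟨h2.1, by omega⟩, this.2⟩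
    have hnm : w ∉ (Finset.Icc 1 v).filter (fun y => γ y = γ (y - 1) + 1) := by
      simp only [Finset.mem_filter, Finset.mem_Icc]
      rintro ⟨⟨_, h⟩, _⟩; omega
    have := Finset.card_le_card hsub
    rw [Finset.card_insert_of_notMem hnm, hcw, hcv] at this
    omega

lemma dyck_ivt {n : ℕ} {γ : ℕ → ℤ} (hγ : IsDyckPathFn n γ) :
    ∀ b a, a ≤ b → b ≤ 2 * n → ∀ c : ℤ, γ b ≤ c → c ≤ γ a →
      ∃ x, a ≤ x ∧ x ≤ b ∧ γ x = c := by
  intro b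
  induction b with
  | zero =>
    intro a ha _ c h1 h2
    have : a = 0 := by omega
    subst this
    exact ⟨0, le_rfl, le_rfl, le_antisymm h1 h2⟩
  | succ b ih =>
    intro a ha hb c h1 h2
    by_cases hc : c = γ (b + 1)
    · exact ⟨b + 1, by omega, le_rfl, hc.symm⟩
    rcases Nat.eq_or_lt_of_le ha with heq | hab
    · subst heq
      exact ⟨b + 1, le_rfl, le_rfl, le_antisymm h1 h2⟩
    have hstep := hγ.2.2.2 b (by omega)
    have hgb : γ b ≤ c := by rcases hstep with h | h <;> omega
    obtain ⟨x, hx1, hx2, hx3⟩ := ih a (by omega) (by omega) c hgb h2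
    exact ⟨x, hx1, by omega, hx3⟩

lemma excLen_spec {n : ℕ} {γ : ℕ → ℤ} (hγ : IsDyckPathFn n γ) {i : ℕ}
    (hi1 : 1 ≤ i) (hin : i ≤ n) :
    (2 ≤ excLen n γ i ∧ vPos n γ i - 1 + excLen n γ i ≤ 2 * n) ∧
      γ (vPos n γ i - 1 + excLen n γ i) = hgt n γ i - 1 ∧
      (∀ l, 1 ≤ l → γ (vPos n γ i - 1 + l) = hgt n γ i - 1 → excLen n γ i ≤ l) := by
  obtain ⟨⟨hv1, hv2⟩, hup, hval⟩ := vPos_spec hγ hi1 hin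
  set v := vPos n γ i with hvdef
  have hh1 : 1 ≤ hgt n γ i := by
    have := hγ.2.2.1 (v - 1) (by omega)
    rw [hgt, ← hvdef, hup]
    omega
  -- a witness via IVT
  obtain ⟨x, hx1, hx2, hx3⟩ := dyck_ivt hγ (2 * n) v hv2 le_rfl (hgt n γ i - 1)
    (by rw [hγ.2.1]; omega) (by rw [hgt, ← hvdef]; omega)
  have hwit : (x - (v - 1)) ∈ {l : ℕ | 1 ≤ l ∧ γ (v - 1 + l) = hgt n γ i - 1} := by
    constructor
    · omega
    · have : v - 1 + (x - (v - 1)) = x := by omega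
      rw [this]; exact hx3
  have hne : {l : ℕ | 1 ≤ l ∧ γ (v - 1 + l) = hgt n γ i - 1}.Nonempty := ⟨_, hwit⟩
  have hmem := Nat.sInf_mem hne
  have hsle : sInf {l : ℕ | 1 ≤ l ∧ γ (v - 1 + l) = hgt n γ i - 1} ≤ x - (v - 1) :=
    Nat.sInf_le hwit
  have hEx : excLen n γ i = sInf {l : ℕ | 1 ≤ l ∧ γ (v - 1 + l) = hgt n γ i - 1} := by
    rw [excLen, ← hvdef]
  obtain ⟨hge1, heq⟩ := hmem
  have hgv : hgt n γ i = γ v := by rw [hgt, ← hvdef]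
  have hne1 : sInf {l : ℕ | 1 ≤ l ∧ γ (v - 1 + l) = hgt n γ i - 1} ≠ 1 := by
    intro h1
    rw [h1] at heq
    have hvv : v - 1 + 1 = v := by omega
    rw [hvv, ← hgv] at heq
    omega
  refine ⟨⟨by rw [hEx]; omega, by rw [hEx]; omega⟩, by rw [hEx]; exact heq, ?_⟩
  intro l hl1 hl2
  rw [hEx]
  exact Nat.sInf_le ⟨hl1, hl2⟩

def glueP (m : ℕ) (γ₁ γ₂ : ℕ → ℤ) : ℕ → ℤ :=
  fun x => if x = 0 then 0 else if x ≤ 2 * m - 1 then γ₁ (x - 1) + 1 else γ₂ (x - 2 * m)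

lemma glueP_zero (m : ℕ) (γ₁ γ₂ : ℕ → ℤ) : glueP m γ₁ γ₂ 0 = 0 := by simp [glueP]

lemma glueP_low {m x : ℕ} (γ₁ γ₂ : ℕ → ℤ) (hx1 : 1 ≤ x) (hx2 : x ≤ 2 * m - 1) :
    glueP m γ₁ γ₂ x = γ₁ (x - 1) + 1 := by
  rw [glueP]
  rw [if_neg (by omega), if_pos hx2]

lemma glueP_high {m x : ℕ} (γ₁ γ₂ : ℕ → ℤ) (hm : 1 ≤ m) (hx : 2 * m ≤ x) :
    glueP m γ₁ γ₂ x = γ₂ (x - 2 * m) := by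
  rw [glueP]
  rw [if_neg (by omega), if_neg (by omega)]

lemma glueP_nonneg_aux {k : ℕ} {δ : ℕ → ℤ} (h : δ ∈ DyckSet k) (x : ℕ) : 0 ≤ δ x := by
  rcases le_or_gt x (2 * k) with hx | hx
  · exact h.1.2.2.1 x hx
  · rw [h.2 x (by omega)]

lemma glueP_mem {n m : ℕ} {γ₁ γ₂ : ℕ → ℤ} (hm1 : 1 ≤ m) (hmn : m ≤ n)
    (h1 : γ₁ ∈ DyckSet (m - 1)) (h2 : γ₂ ∈ DyckSet (n - m)) :
    glueP m γ₁ γ₂ ∈ DyckSet n := by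
  obtain ⟨hd1, hp1⟩ := h1
  obtain ⟨hd2, hp2⟩ := h2
  constructor
  · refine ⟨glueP_zero m γ₁ γ₂, ?_, ?_, ?_⟩
    · rw [glueP_high γ₁ γ₂ hm1 (by omega)]
      have : 2 * n - 2 * m = 2 * (n - m) + (2 * (n - m) - (2 * n - 2 * m)) := by omega
      rw [show 2 * n - 2 * m = 2 * (n - m) by omega]
      exact hd2.2.1
    · intro x hx
      rcases Nat.eq_zero_or_pos x with rfl | hx1
      · rw [glueP_zero]
      rcases le_or_gt x (2 * m - 1) with hx2 | hx2
      · rw [glueP_low γ₁ γ₂ hx1 hx2]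
        have := glueP_nonneg_aux ⟨hd1, hp1⟩ (x - 1)
        omega
      · rw [glueP_high γ₁ γ₂ hm1 (by omega)]
        exact glueP_nonneg_aux ⟨hd2, hp2⟩ _
    · intro x hx
      rcases Nat.eq_zero_or_pos x with rfl | hx1
      · left
        rw [glueP_zero, glueP_low γ₁ γ₂ (by omega) (by omega), hd1.1]
      rcases Nat.lt_or_ge x (2 * m - 1) with hx2 | hx2
      · -- both in low region
        rw [glueP_low γ₁ γ₂ hx1 (by omega), glueP_low γ₁ γ₂ (by omega) (by omega)]
        have hstep := hd1.2.2.2 (x - 1) (by omega)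
        rw [show x - 1 + 1 = x by omega] at hstep
        rw [show x + 1 - 1 = x by omega]
        rcases hstep with h | h
        · left; omega
        · right; omega
      rcases Nat.eq_or_lt_of_le hx2 with heq | hgt
      · -- x = 2m - 1, step down to 2m
        right
        rw [glueP_low γ₁ γ₂ hx1 (by omega),
          glueP_high γ₁ γ₂ hm1 (by omega), show x + 1 - 2 * m = 0 by omega, hd2.1]
        have : γ₁ (x - 1) = 0 := by
          have : x - 1 = 2 * (m - 1) := by omega
          rw [this]; exact hd1.2.1
        omega
      · -- both in high region
        rw [glueP_high γ₁ γ₂ hm1 (by omega), glueP_high γ₁ γ₂ hm1 (by omega)]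
        have hstep := hd2.2.2.2 (x - 2 * m) (by omega)
        rw [show x - 2 * m + 1 = x + 1 - 2 * m by omega] at hstep
        exact hstep
  · intro x hx
    rw [glueP_high γ₁ γ₂ hm1 (by omega)]
    exact hp2 _ (by omega)

lemma perm231_glue_one {n m : ℕ} {γ₁ γ₂ : ℕ → ℤ} (hm1 : 1 ≤ m) (hmn : m ≤ n)
    (h1 : γ₁ ∈ DyckSet (m - 1)) (h2 : γ₂ ∈ DyckSet (n - m)) :
    perm231 n (glueP m γ₁ γ₂) 1 = m := by
  have hD := glueP_mem hm1 hmn h1 h2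
  set γ := glueP m γ₁ γ₂ with hγdef
  have hγ1 : γ 1 = 1 := by
    rw [hγdef, glueP_low γ₁ γ₂ le_rfl (by omega)]
    simp [h1.1.1]
  have hv : vPos n γ 1 = 1 := by
    apply vPos_eq hD.1 le_rfl (by omega) le_rfl (by omega)
    · rw [hγ1]; simp [hγdef, glueP_zero]
    · rw [hγ1]; norm_num
  have hh : hgt n γ 1 = 1 := by rw [hgt, hv, hγ1]
  have hS : {l : ℕ | 1 ≤ l ∧ γ (vPos n γ 1 - 1 + l) = hgt n γ 1 - 1}
      = {l : ℕ | 1 ≤ l ∧ γ l = 0} := by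
    ext l
    rw [hv, hh]
    simp
  have hEx : excLen n γ 1 = 2 * m := by
    rw [excLen, hS]
    have hmem : 2 * m ∈ {l : ℕ | 1 ≤ l ∧ γ l = 0} := by
      refine ⟨by omega, ?_⟩
      rw [hγdef, glueP_high γ₁ γ₂ hm1 le_rfl]
      simp [h2.1.1]
    have hlb : ∀ l ∈ {l : ℕ | 1 ≤ l ∧ γ l = 0}, 2 * m ≤ l := by
      rintro l ⟨hl1, hl2⟩
      by_contra hlt
      have : γ l = γ₁ (l - 1) + 1 := by
        rw [hγdef]; exact glueP_low γ₁ γ₂ hl1 (by omega)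
      have := glueP_nonneg_aux h1 (l - 1)
      omega
    exact le_antisymm (Nat.sInf_le hmem) (le_csInf ⟨_, hmem⟩ hlb)
  rw [perm231, hEx, hh]
  push_cast [Nat.mul_div_cancel_left m (by norm_num : 0 < 2)]
  ring

lemma perm231_glue_mid {n m i : ℕ} {γ₁ γ₂ : ℕ → ℤ} (hm1 : 1 ≤ m) (hmn : m ≤ n)
    (h1 : γ₁ ∈ DyckSet (m - 1)) (h2 : γ₂ ∈ DyckSet (n - m))
    (hi2 : 2 ≤ i) (him : i ≤ m) :
    perm231 n (glueP m γ₁ γ₂) i = perm231 (m - 1) γ₁ (i - 1) := by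
  have hD := glueP_mem hm1 hmn h1 h2
  set γ := glueP m γ₁ γ₂ with hγdef
  have hi1' : 1 ≤ i - 1 := by omega
  have him' : i - 1 ≤ m - 1 := by omega
  obtain ⟨⟨hv1', hv2'⟩, hup', hval'⟩ := vPos_spec h1.1 hi1' him'
  set v' := vPos (m - 1) γ₁ (i - 1) with hv'def
  obtain ⟨⟨hl2', hle'⟩, heq', hmin'⟩ := excLen_spec h1.1 hi1' him'
  set l' := excLen (m - 1) γ₁ (i - 1) with hl'def
  set h' := hgt (m - 1) γ₁ (i - 1) with hh'def
  rw [← hv'def] at heq' hle' hmin'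
  -- γ value at v' + 1 and v'
  have hγv : γ (v' + 1) = γ₁ v' + 1 := by
    rw [hγdef]
    rw [glueP_low γ₁ γ₂ (by omega) (by omega)]
    simp
  have hγv1 : γ v' = γ₁ (v' - 1) + 1 := by
    rw [hγdef]; exact glueP_low γ₁ γ₂ (by omega) (by omega)
  have hv : vPos n γ i = v' + 1 := by
    apply vPos_eq hD.1 (by omega) (by omega) (by omega) (by omega)
    · rw [hγv, show v' + 1 - 1 = v' by omega, hγv1, hup']
    · rw [hγv]; push_cast; push_cast at hval'; omega
  have hh : hgt n γ i = h' + 1 := by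
    rw [hgt, hv, hγv, hh'def, hgt, ← hv'def]
  -- excursion length
  have hvv : vPos n γ i - 1 = v' := by omega
  have hEx : excLen n γ i = l' := by
    rw [excLen, hvv, hh]
    have hmemS : l' ∈ {l : ℕ | 1 ≤ l ∧ γ (v' + l) = h' + 1 - 1} := by
      refine ⟨by omega, ?_⟩
      have : γ (v' + l') = γ₁ (v' - 1 + l') + 1 := by
        rw [hγdef, glueP_low γ₁ γ₂ (by omega) (by omega)]
        congr 2
        omega
      rw [this, heq']
      ring
    have hlb : ∀ l ∈ {l : ℕ | 1 ≤ l ∧ γ (v' + l) = h' + 1 - 1}, l' ≤ l := by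
      rintro l ⟨hl1, hl2⟩
      rcases le_or_gt (v' + l) (2 * m - 1) with hcase | hcase
      · apply hmin' l hl1
        have : γ (v' + l) = γ₁ (v' - 1 + l) + 1 := by
          rw [hγdef, glueP_low γ₁ γ₂ (by omega) hcase]
          congr 2
          omega
        rw [this] at hl2
        omega
      · omega
    exact le_antisymm (Nat.sInf_le hmemS) (le_csInf ⟨_, hmemS⟩ hlb)
  rw [perm231, perm231, hEx, hh, ← hl'def, ← hh'def]
  have : ((i - 1 : ℕ) : ℤ) = (i : ℤ) - 1 := by omega
  rw [this]
  ring

lemma perm231_glue_high {n m i : ℕ} {γ₁ γ₂ : ℕ → ℤ} (hm1 : 1 ≤ m) (hmn : m ≤ n)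
    (h1 : γ₁ ∈ DyckSet (m - 1)) (h2 : γ₂ ∈ DyckSet (n - m))
    (hi2 : m < i) (hin : i ≤ n) :
    perm231 n (glueP m γ₁ γ₂) i = perm231 (n - m) γ₂ (i - m) + m := by
  have hD := glueP_mem hm1 hmn h1 h2
  set γ := glueP m γ₁ γ₂ with hγdef
  have hi1' : 1 ≤ i - m := by omega
  have hin' : i - m ≤ n - m := by omega
  obtain ⟨⟨hv1', hv2'⟩, hup', hval'⟩ := vPos_spec h2.1 hi1' hin'
  set v' := vPos (n - m) γ₂ (i - m) with hv'def
  have hγv : γ (2 * m + v') = γ₂ v' := by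
    rw [hγdef, glueP_high γ₁ γ₂ hm1 (by omega)]
    congr 1
    omega
  have hγv1 : γ (2 * m + v' - 1) = γ₂ (v' - 1) := by
    rw [hγdef, glueP_high γ₁ γ₂ hm1 (by omega)]
    congr 1
    omega
  have hv : vPos n γ i = 2 * m + v' := by
    apply vPos_eq hD.1 (by omega) (by omega) (by omega) (by omega)
    · rw [hγv, hγv1, hup']
    · rw [hγv]; push_cast; push_cast at hval'; omega
  have hh : hgt n γ i = hgt (n - m) γ₂ (i - m) := by
    rw [hgt, hv, hγv, hgt, ← hv'def]
  have hvv : vPos n γ i - 1 = 2 * m + (v' - 1) := by omega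
  have hEx : excLen n γ i = excLen (n - m) γ₂ (i - m) := by
    rw [excLen, excLen, hvv, hh, ← hv'def]
    congr 1
    ext l
    simp only [Set.mem_setOf_eq]
    constructor
    · rintro ⟨hl1, hl2⟩
      refine ⟨hl1, ?_⟩
      rw [hγdef, glueP_high γ₁ γ₂ hm1 (by omega)] at hl2
      rw [show 2 * m + (v' - 1) + l - 2 * m = v' - 1 + l by omega] at hl2
      exact hl2
    · rintro ⟨hl1, hl2⟩
      refine ⟨hl1, ?_⟩
      rw [hγdef, glueP_high γ₁ γ₂ hm1 (by omega)]
      rw [show 2 * m + (v' - 1) + l - 2 * m = v' - 1 + l by omega]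
      exact hl2
  rw [perm231, perm231, hEx, hh]
  have : ((i - m : ℕ) : ℤ) = (i : ℤ) - m := by omega
  rw [this]
  ring

def glueS (m n : ℕ) (f g : ℕ → ℤ) : ℕ → ℤ :=
  fun i => if i = 0 ∨ n < i then 0
    else if i = 1 then (m : ℤ)
    else if i ≤ m then f (i - 1)
    else g (i - m) + (m : ℤ)

lemma glueS_one {m n : ℕ} (hn : 1 ≤ n) (f g : ℕ → ℤ) : glueS m n f g 1 = m := by
  rw [glueS]; rw [if_neg (by omega), if_pos rfl]

lemma glueS_at_mid {m n : ℕ} (f g : ℕ → ℤ) {i : ℕ} (h2 : 2 ≤ i) (him : i ≤ m)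
    (hmn : m ≤ n) : glueS m n f g i = f (i - 1) := by
  rw [glueS]; rw [if_neg (by omega), if_neg (by omega), if_pos him]

lemma glueS_at_high {m n : ℕ} (f g : ℕ → ℤ) {i : ℕ} (h2 : m < i) (hin : i ≤ n)
    (hm : 1 ≤ m) : glueS m n f g i = g (i - m) + m := by
  rw [glueS]; rw [if_neg (by omega), if_neg (by omega), if_neg (by omega)]

lemma Phi_glue {n m : ℕ} {γ₁ γ₂ : ℕ → ℤ} (hm1 : 1 ≤ m) (hmn : m ≤ n)
    (h1 : γ₁ ∈ DyckSet (m - 1)) (h2 : γ₂ ∈ DyckSet (n - m)) :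
    (fun i => if 1 ≤ i ∧ i ≤ n then perm231 n (glueP m γ₁ γ₂) i else 0)
      = glueS m n (fun i => if 1 ≤ i ∧ i ≤ m - 1 then perm231 (m - 1) γ₁ i else 0)
          (fun i => if 1 ≤ i ∧ i ≤ n - m then perm231 (n - m) γ₂ i else 0) := by
  funext i
  by_cases h0 : 1 ≤ i ∧ i ≤ n
  · rw [if_pos h0, glueS]
    rw [if_neg (by omega)]
    by_cases hone : i = 1
    · subst hone
      rw [if_pos rfl]
      exact perm231_glue_one hm1 hmn h1 h2
    by_cases hmid : i ≤ m
    · rw [if_neg hone, if_pos hmid, if_pos (by omega)]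
      exact perm231_glue_mid hm1 hmn h1 h2 (by omega) hmid
    · rw [if_neg hone, if_neg hmid, if_pos (by omega)]
      exact perm231_glue_high hm1 hmn h1 h2 (by omega) h0.2
  · rw [if_neg h0, glueS, if_pos (by omega)]

lemma dyck_split {n : ℕ} {γ : ℕ → ℤ} (hn : 1 ≤ n) (hγ : γ ∈ DyckSet n) :
    ∃ m γ₁ γ₂, 1 ≤ m ∧ m ≤ n ∧ γ₁ ∈ DyckSet (m - 1) ∧ γ₂ ∈ DyckSet (n - m) ∧
      γ = glueP m γ₁ γ₂ := by
  obtain ⟨hd, hp⟩ := hγ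
  have h2n : (2 * n : ℕ) ∈ {x : ℕ | 1 ≤ x ∧ γ x = 0} := ⟨by omega, hd.2.1⟩
  set S := {x : ℕ | 1 ≤ x ∧ γ x = 0} with hS
  obtain ⟨hr1, hr0⟩ := Nat.sInf_mem ⟨_, h2n⟩
  set r := sInf S with hrdef
  have hrle : r ≤ 2 * n := Nat.sInf_le h2n
  have hpos : ∀ x, 1 ≤ x → x < r → 1 ≤ γ x := by
    intro x hx1 hxr
    have hne : γ x ≠ 0 := by
      intro h0
      have : r ≤ x := Nat.sInf_le ⟨hx1, h0⟩
      omega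
    have := hd.2.2.1 x (by omega)
    omega
  -- r is even
  have hrcount := upcount hd r hrle
  rw [hr0] at hrcount
  set c := ((Finset.Icc 1 r).filter (fun y => γ y = γ (y - 1) + 1)).card with hc
  have hr2c : r = 2 * c := by omega
  have hc1 : 1 ≤ c := by omega
  have hcn : c ≤ n := by omega
  refine ⟨c, (fun x => if x ≤ 2 * (c - 1) then γ (x + 1) - 1 else 0),
    (fun x => γ (x + 2 * c)), hc1, hcn, ?_, ?_, ?_⟩
  · -- γ₁ ∈ DyckSet (c-1)
    have hγ1 : γ 1 = 1 := by
      have h01 := hd.2.2.2 0 (by omega)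
      have hge := hd.2.2.1 1 (by omega)
      norm_num [hd.1] at h01
      omega
    have hγr1 : γ (2 * c - 1) = 1 := by
      rcases Nat.eq_or_lt_of_le (show 1 ≤ r by omega) with heq | hgt
      · -- r = 1 impossible since r = 2c
        omega
      have := hd.2.2.2 (r - 1) (by omega)
      rw [show r - 1 + 1 = r by omega, hr0] at this
      have := hpos (r - 1) (by omega) (by omega)
      have h3 : γ (2 * c - 1) = γ (r - 1) := by rw [show 2 * c - 1 = r - 1 by omega]
      omega
    refine ⟨⟨?_, ?_, ?_, ?_⟩, ?_⟩
    · beta_reduce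
      rw [if_pos (by omega : (0:ℕ) ≤ 2 * (c - 1)), hγ1]; ring
    · beta_reduce
      rw [if_pos le_rfl, show 2 * (c - 1) + 1 = 2 * c - 1 by omega, hγr1]; ring
    · intro x hx
      beta_reduce
      rw [if_pos hx]
      have := hpos (x + 1) (by omega) (by omega)
      omega
    · intro x hx
      beta_reduce
      rw [if_pos (by omega), if_pos (by omega)]
      have := hd.2.2.2 (x + 1) (by omega)
      rcases this with h | h
      · left; omega
      · right; omega
    · intro x hx
      beta_reduce
      rcases Nat.eq_or_lt_of_le hx with heq | hgt
      · rw [if_pos (by omega), show x + 1 = 2 * c - 1 by omega, hγr1]; ring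
      · rw [if_neg (by omega)]
  · -- γ₂ ∈ DyckSet (n - c)
    refine ⟨⟨?_, ?_, ?_, ?_⟩, ?_⟩
    · simpa [hr2c] using hr0
    · beta_reduce
      rw [show 2 * (n - c) + 2 * c = 2 * n by omega]; exact hd.2.1
    · intro x hx
      exact hd.2.2.1 _ (by omega)
    · intro x hx
      have := hd.2.2.2 (x + 2 * c) (by omega)
      rw [show x + 2 * c + 1 = x + 1 + 2 * c by omega] at this
      exact this
    · intro x hx
      exact hp _ (by omega)
  · -- γ = glueP
    funext x
    rcases Nat.eq_zero_or_pos x with rfl | hx1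
    · rw [glueP_zero, hd.1]
    rcases le_or_gt x (2 * c - 1) with hx2 | hx2
    · rw [glueP_low _ _ hx1 hx2, if_pos (by omega), show x - 1 + 1 = x by omega]
      ring
    · rw [glueP_high _ _ (by omega) (by omega), show x - 2 * c + 2 * c = x by omega]

lemma glueS_mem {n m : ℕ} {f g : ℕ → ℤ} (hm1 : 1 ≤ m) (hmn : m ≤ n)
    (hf : f ∈ Avoid231Set (m - 1)) (hg : g ∈ Avoid231Set (n - m)) :
    glueS m n f g ∈ Avoid231Set n := by
  obtain ⟨hfbij, hfvan, hfav⟩ := hf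
  obtain ⟨hgbij, hgvan, hgav⟩ := hg
  have hfv : ∀ i, 1 ≤ i → i ≤ m - 1 → 1 ≤ f i ∧ f i ≤ (m : ℤ) - 1 := by
    intro i h1 h2
    have := hfbij.1 (Set.mem_Icc.mpr ⟨h1, h2⟩)
    rw [Set.mem_Icc] at this
    omega
  have hgv : ∀ i, 1 ≤ i → i ≤ n - m → 1 ≤ g i ∧ g i ≤ (n : ℤ) - m := by
    intro i h1 h2
    have := hgbij.1 (Set.mem_Icc.mpr ⟨h1, h2⟩)
    rw [Set.mem_Icc] at this
    omega
  have hval1 : glueS m n f g 1 = m := by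
    rw [glueS]; rw [if_neg (by omega), if_pos rfl]
  have hvalmid : ∀ i, 2 ≤ i → i ≤ m → glueS m n f g i = f (i - 1) := by
    intro i h1 h2
    rw [glueS]; rw [if_neg (by omega), if_neg (by omega), if_pos h2]
  have hvalhigh : ∀ i, m < i → i ≤ n → glueS m n f g i = g (i - m) + m := by
    intro i h1 h2
    rw [glueS]; rw [if_neg (by omega), if_neg (by omega), if_neg (by omega)]
  refine ⟨⟨?_, ?_, ?_⟩, ?_, ?_⟩
  · -- MapsTo
    intro i hi
    rw [Set.mem_Icc] at hi
    rw [Set.mem_Icc]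
    rcases Nat.eq_or_lt_of_le hi.1 with h1 | h1
    · rw [← h1, hval1]; omega
    rcases le_or_gt i m with h2 | h2
    · rw [hvalmid i (by omega) h2]
      have := hfv (i - 1) (by omega) (by omega)
      omega
    · rw [hvalhigh i h2 hi.2]
      have := hgv (i - m) (by omega) (by omega)
      omega
  · -- InjOn
    intro i hi j hj hij
    rw [Set.mem_Icc] at hi hj
    have blocks : ∀ k, 1 ≤ k → k ≤ n →
        (k = 1 ∧ glueS m n f g k = m) ∨
        (2 ≤ k ∧ k ≤ m ∧ glueS m n f g k = f (k - 1)) ∨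
        (m < k ∧ k ≤ n ∧ glueS m n f g k = g (k - m) + m) := by
      intro k h1 h2
      rcases Nat.eq_or_lt_of_le h1 with h | h
      · exact Or.inl ⟨h.symm, by rw [← h, hval1]⟩
      rcases le_or_gt k m with h' | h'
      · exact Or.inr (Or.inl ⟨by omega, h', hvalmid k (by omega) h'⟩)
      · exact Or.inr (Or.inr ⟨h', h2, hvalhigh k h' h2⟩)
    rcases blocks i hi.1 hi.2 with ⟨hi1, hie⟩ | ⟨hi1, hi2, hie⟩ | ⟨hi1, hi2, hie⟩ <;>
      rcases blocks j hj.1 hj.2 with ⟨hj1, hje⟩ | ⟨hj1, hj2, hje⟩ | ⟨hj1, hj2, hje⟩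
    · omega
    · exfalso; have := hfv (j - 1) (by omega) (by omega); omega
    · exfalso; have := hgv (j - m) (by omega) (by omega); omega
    · exfalso; have := hfv (i - 1) (by omega) (by omega); omega
    · -- both middle
      have := hfbij.2.1 (Set.mem_Icc.mpr ⟨by omega, by omega⟩ :
          i - 1 ∈ Set.Icc 1 (m - 1)) (Set.mem_Icc.mpr ⟨by omega, by omega⟩ :
          j - 1 ∈ Set.Icc 1 (m - 1)) (by rw [← hie, ← hje, hij])
      omega
    · exfalso
      have h1 := hfv (i - 1) (by omega) (by omega)
      have h2 := hgv (j - m) (by omega) (by omega)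
      omega
    · exfalso; have := hgv (i - m) (by omega) (by omega); omega
    · exfalso
      have h1 := hgv (i - m) (by omega) (by omega)
      have h2 := hfv (j - 1) (by omega) (by omega)
      omega
    · -- both high
      have := hgbij.2.1 (Set.mem_Icc.mpr ⟨by omega, by omega⟩ :
          i - m ∈ Set.Icc 1 (n - m)) (Set.mem_Icc.mpr ⟨by omega, by omega⟩ :
          j - m ∈ Set.Icc 1 (n - m)) (by
        have : g (i - m) + (m : ℤ) = g (j - m) + m := by rw [← hie, ← hje, hij]
        omega)
      omega
  · -- SurjOn
    intro t ht
    rw [Set.mem_Icc] at ht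
    rcases lt_trichotomy t (m : ℤ) with h | h | h
    · have : t ∈ Set.Icc (1 : ℤ) ((m - 1 : ℕ) : ℤ) := by rw [Set.mem_Icc]; omega
      obtain ⟨i, hi, hit⟩ := hfbij.2.2 this
      rw [Set.mem_Icc] at hi
      refine ⟨i + 1, Set.mem_Icc.mpr ⟨by omega, by omega⟩, ?_⟩
      rw [hvalmid (i + 1) (by omega) (by omega), show i + 1 - 1 = i by omega, hit]
    · exact ⟨1, Set.mem_Icc.mpr ⟨le_rfl, by omega⟩, by rw [hval1, h]⟩
    · have : t - m ∈ Set.Icc (1 : ℤ) ((n - m : ℕ) : ℤ) := by rw [Set.mem_Icc]; omega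
      obtain ⟨i, hi, hit⟩ := hgbij.2.2 this
      rw [Set.mem_Icc] at hi
      refine ⟨i + m, Set.mem_Icc.mpr ⟨by omega, by omega⟩, ?_⟩
      rw [hvalhigh (i + m) (by omega) (by omega), show i + m - m = i by omega, hit]
      ring
  · -- vanishing
    intro i hi
    rw [Set.mem_Icc] at hi
    rw [glueS, if_pos (by omega)]
  · -- 231-avoidance
    rintro ⟨i, j, k, hi, hj, hk, hij, hjk, hki, hij2⟩
    rw [Set.mem_Icc] at hi hj hk
    rcases Nat.eq_or_lt_of_le hi.1 with h1 | h1
    · -- i = 1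
      rw [← h1, hval1] at hki hij2
      have hjm : m < j := by
        by_contra hjm
        have := hfv (j - 1) (by omega) (by omega)
        rw [hvalmid j (by omega) (by omega)] at hij2
        omega
      have := hgv (k - m) (by omega) (by omega)
      rw [hvalhigh k (by omega) hk.2] at hki
      omega
    rcases le_or_gt i m with h2 | h2
    · -- i middle
      rw [hvalmid i (by omega) h2] at hki hij2
      have hfi := hfv (i - 1) (by omega) (by omega)
      have hkm : k ≤ m := by
        by_contra hkm
        have := hgv (k - m) (by omega) (by omega)
        rw [hvalhigh k (by omega) hk.2] at hki
        omega
      rw [hvalmid k (by omega) hkm] at hki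
      rw [hvalmid j (by omega) (by omega)] at hij2
      exact hfav ⟨i - 1, j - 1, k - 1, Set.mem_Icc.mpr ⟨by omega, by omega⟩,
        Set.mem_Icc.mpr ⟨by omega, by omega⟩, Set.mem_Icc.mpr ⟨by omega, by omega⟩,
        by omega, by omega, hki, hij2⟩
    · -- i high
      rw [hvalhigh i h2 hi.2] at hki hij2
      rw [hvalhigh j (by omega) hj.2] at hij2
      rw [hvalhigh k (by omega) hk.2] at hki
      exact hgav ⟨i - m, j - m, k - m, Set.mem_Icc.mpr ⟨by omega, by omega⟩,
        Set.mem_Icc.mpr ⟨by omega, by omega⟩, Set.mem_Icc.mpr ⟨by omega, by omega⟩,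
        by omega, by omega, by omega, by omega⟩

lemma perm_split {n : ℕ} {σ : ℕ → ℤ} (hn : 1 ≤ n) (hσ : σ ∈ Avoid231Set n) :
    ∃ m f g, 1 ≤ m ∧ m ≤ n ∧ f ∈ Avoid231Set (m - 1) ∧ g ∈ Avoid231Set (n - m) ∧
      σ = glueS m n f g := by
  classical
  obtain ⟨hbij, hvan, hav⟩ := hσ
  have h1mem : (1 : ℕ) ∈ Set.Icc 1 n := Set.mem_Icc.mpr ⟨le_rfl, hn⟩
  have hσ1 := hbij.1 h1mem
  rw [Set.mem_Icc] at hσ1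
  set m := (σ 1).toNat with hmdef
  have hm : (m : ℤ) = σ 1 := Int.toNat_of_nonneg (by omega)
  have hm1 : 1 ≤ m := by omega
  have hmn : m ≤ n := by omega
  -- preimage function
  set ψ := Function.invFunOn σ (Set.Icc 1 n) with hψdef
  have hψ : ∀ t : ℤ, 1 ≤ t → t ≤ n → (1 ≤ ψ t ∧ ψ t ≤ n) ∧ σ (ψ t) = t := by
    intro t h1 h2
    obtain ⟨p, hp, hpt⟩ := hbij.2.2 (Set.mem_Icc.mpr ⟨h1, h2⟩)
    have hex : ∃ a ∈ Set.Icc 1 n, σ a = t := ⟨p, hp, hpt⟩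
    have := Function.invFunOn_mem hex
    rw [Set.mem_Icc] at this
    exact ⟨this, Function.invFunOn_eq hex⟩
  have hmaps : ∀ p, 1 ≤ p → p ≤ n → 1 ≤ σ p ∧ σ p ≤ n := by
    intro p h1 h2
    have := hbij.1 (Set.mem_Icc.mpr ⟨h1, h2⟩)
    rw [Set.mem_Icc] at this
    exact this
  have hinj : ∀ p q, 1 ≤ p → p ≤ n → 1 ≤ q → q ≤ n → σ p = σ q → p = q := by
    intro p q hp1 hp2 hq1 hq2 h
    exact hbij.2.1 (Set.mem_Icc.mpr ⟨hp1, hp2⟩) (Set.mem_Icc.mpr ⟨hq1, hq2⟩) h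
  -- Claim 1 : positions 2..m have values < m
  have claim1 : ∀ j, 2 ≤ j → j ≤ m → σ j < m := by
    intro j hj2 hjm
    by_contra hc
    have hjne : σ j ≠ m := by
      intro h
      have := hinj j 1 (by omega) (by omega) le_rfl hn (by rw [h, hm])
      omega
    have hjgt : (m : ℤ) < σ j := by omega
    have hcard := Finset.card_le_card_of_injOn (f := ψ)
      (s := Finset.Icc (1 : ℤ) ((m : ℤ) - 1)) (t := Finset.Icc 2 (j - 1)) ?_ ?_
    · rw [Nat.card_Icc, Int.card_Icc] at hcard
      omega
    · intro t ht
      rw [Finset.mem_coe, Finset.mem_Icc] at ht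
      obtain ⟨⟨hp1, hp2⟩, hpe⟩ := hψ t ht.1 (by omega)
      rw [Finset.mem_coe, Finset.mem_Icc]
      have hne1 : ψ t ≠ 1 := by
        intro h; rw [h, ← hm] at hpe; omega
      have hnej : ψ t ≠ j := by
        intro h; rw [h] at hpe; omega
      have hltj : ψ t < j := by
        by_contra hge
        exact hav ⟨1, j, ψ t, Set.mem_Icc.mpr ⟨le_rfl, hn⟩,
          Set.mem_Icc.mpr ⟨by omega, by omega⟩, Set.mem_Icc.mpr ⟨by omega, by omega⟩,
          by omega, by omega, by rw [hpe, ← hm]; omega, by rw [← hm]; omega⟩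
      omega
    · intro t1 ht1 t2 ht2 h
      rw [Finset.coe_Icc, Set.mem_Icc] at ht1 ht2
      have he1 := (hψ t1 ht1.1 (by omega)).2
      have he2 := (hψ t2 ht2.1 (by omega)).2
      rw [← he1, ← he2, h]
  -- Claim 2 : positions m+1..n have values > m
  have claim2 : ∀ k, m < k → k ≤ n → (m : ℤ) < σ k := by
    intro k hk1 hk2
    by_contra hc
    have hkne : σ k ≠ m := by
      intro h
      have := hinj k 1 (by omega) (by omega) le_rfl hn (by rw [h, hm])
      omega
    have hklt : σ k < m := by omega
    have hcard := Finset.card_le_card_of_injOn (f := σ)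
      (s := insert k (Finset.Icc 2 m)) (t := Finset.Icc (1 : ℤ) ((m : ℤ) - 1)) ?_ ?_
    · rw [Finset.card_insert_of_notMem (by rw [Finset.mem_Icc]; omega),
        Nat.card_Icc, Int.card_Icc] at hcard
      omega
    · intro p hp
      rcases Finset.mem_insert.mp hp with rfl | hp
      · rw [Finset.mem_coe, Finset.mem_Icc]
        have := hmaps p (by omega) (by omega)
        omega
      · rw [Finset.mem_Icc] at hp
        rw [Finset.mem_coe, Finset.mem_Icc]
        have := claim1 p hp.1 hp.2
        have := hmaps p (by omega) (by omega)
        omega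
    · intro p1 hp1 p2 hp2 h
      rw [Finset.coe_insert, Set.mem_insert_iff, Finset.coe_Icc, Set.mem_Icc] at hp1 hp2
      have hb1 : 1 ≤ p1 ∧ p1 ≤ n := by rcases hp1 with rfl | h' <;> omega
      have hb2 : 1 ≤ p2 ∧ p2 ≤ n := by rcases hp2 with rfl | h' <;> omega
      exact hinj p1 p2 hb1.1 hb1.2 hb2.1 hb2.2 h
  refine ⟨m, fun i => if 1 ≤ i ∧ i ≤ m - 1 then σ (i + 1) else 0,
    fun i => if 1 ≤ i ∧ i ≤ n - m then σ (i + m) - m else 0, hm1, hmn, ?_, ?_, ?_⟩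
  · -- f ∈ Avoid231Set (m-1)
    refine ⟨⟨?_, ?_, ?_⟩, ?_, ?_⟩
    · intro i hi
      rw [Set.mem_Icc] at hi
      beta_reduce
      rw [if_pos (by omega)]
      rw [Set.mem_Icc]
      have h1 := hmaps (i + 1) (by omega) (by omega)
      have h2 := claim1 (i + 1) (by omega) (by omega)
      omega
    · intro i hi j hj h
      rw [Set.mem_Icc] at hi hj
      beta_reduce at h
      rw [if_pos (by omega), if_pos (by omega)] at h
      have := hinj (i + 1) (j + 1) (by omega) (by omega) (by omega) (by omega) h
      omega
    · intro t ht
      rw [Set.mem_Icc] at ht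
      obtain ⟨⟨hp1, hp2⟩, hpe⟩ := hψ t ht.1 (by omega)
      have hne1 : ψ t ≠ 1 := by
        intro h; rw [h, ← hm] at hpe; omega
      have hlem : ψ t ≤ m := by
        by_contra hgt
        have := claim2 (ψ t) (by omega) hp2
        omega
      refine ⟨ψ t - 1, Set.mem_Icc.mpr ⟨by omega, by omega⟩, ?_⟩
      beta_reduce
      rw [if_pos (by omega), show ψ t - 1 + 1 = ψ t by omega, hpe]
    · intro i hi
      rw [Set.mem_Icc] at hi
      beta_reduce
      rw [if_neg (by omega)]
    · rintro ⟨i, j, k, hi, hj, hk, hij, hjk, h1, h2⟩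
      rw [Set.mem_Icc] at hi hj hk
      beta_reduce at h1 h2
      rw [if_pos (by omega), if_pos (by omega)] at h1 h2
      exact hav ⟨i + 1, j + 1, k + 1, Set.mem_Icc.mpr ⟨by omega, by omega⟩,
        Set.mem_Icc.mpr ⟨by omega, by omega⟩, Set.mem_Icc.mpr ⟨by omega, by omega⟩,
        by omega, by omega, h1, h2⟩
  · -- g ∈ Avoid231Set (n-m)
    refine ⟨⟨?_, ?_, ?_⟩, ?_, ?_⟩
    · intro i hi
      rw [Set.mem_Icc] at hi
      beta_reduce
      rw [if_pos (by omega)]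
      rw [Set.mem_Icc]
      have h1 := hmaps (i + m) (by omega) (by omega)
      have h2 := claim2 (i + m) (by omega) (by omega)
      omega
    · intro i hi j hj h
      rw [Set.mem_Icc] at hi hj
      beta_reduce at h
      rw [if_pos (by omega), if_pos (by omega)] at h
      have := hinj (i + m) (j + m) (by omega) (by omega) (by omega) (by omega) (by omega)
      omega
    · intro t ht
      rw [Set.mem_Icc] at ht
      obtain ⟨⟨hp1, hp2⟩, hpe⟩ := hψ (t + m) (by omega) (by omega)
      have hne1 : ψ (t + m) ≠ 1 := by
        intro h; rw [h, ← hm] at hpe; omega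
      have hgtm : m < ψ (t + m) := by
        by_contra hle
        have := claim1 (ψ (t + m)) (by omega) (by omega)
        omega
      refine ⟨ψ (t + m) - m, Set.mem_Icc.mpr ⟨by omega, by omega⟩, ?_⟩
      beta_reduce
      rw [if_pos (by omega), show ψ (t + m) - m + m = ψ (t + m) by omega, hpe]
      ring
    · intro i hi
      rw [Set.mem_Icc] at hi
      beta_reduce
      rw [if_neg (by omega)]
    · rintro ⟨i, j, k, hi, hj, hk, hij, hjk, h1, h2⟩
      rw [Set.mem_Icc] at hi hj hk
      beta_reduce at h1 h2
      rw [if_pos (by omega), if_pos (by omega)] at h1 h2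
      exact hav ⟨i + m, j + m, k + m, Set.mem_Icc.mpr ⟨by omega, by omega⟩,
        Set.mem_Icc.mpr ⟨by omega, by omega⟩, Set.mem_Icc.mpr ⟨by omega, by omega⟩,
        by omega, by omega, by omega, by omega⟩
  · -- σ = glueS
    funext i
    rw [glueS]
    by_cases h0 : i = 0 ∨ n < i
    · rw [if_pos h0]
      exact hvan i (by rw [Set.mem_Icc]; omega)
    rw [if_neg h0]
    by_cases h1 : i = 1
    · rw [if_pos h1, h1, hm]
    rw [if_neg h1]
    by_cases h2 : i ≤ m
    · rw [if_pos h2]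
      beta_reduce
      rw [if_pos (by omega), show i - 1 + 1 = i by omega]
    · rw [if_neg h2]
      beta_reduce
      rw [if_pos (by omega), show i - m + m = i by omega]
      ring


/-- The map `γ ↦ σ_γ`, `σ_γ i = i + l_i/2 - h_i`, is a bijection from Dyck paths
of length `2n` onto 231-avoiding permutations of `[n]`. -/
theorem perm231_bijection (n : ℕ) :
    Set.BijOn (fun γ i => if 1 ≤ i ∧ i ≤ n then perm231 n γ i else 0)
      (DyckSet n) (Avoid231Set n) := by
  induction n using Nat.strong_induction_on with
  | _ n IH =>
  rcases Nat.eq_zero_or_pos n with rfl | hn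
  · -- base case n = 0
    have hA : (fun _ : ℕ => (0 : ℤ)) ∈ Avoid231Set 0 := by
      have hempty : Set.Icc 1 0 = (∅ : Set ℕ) := Set.Icc_eq_empty (by norm_num)
      have hemptyZ : Set.Icc (1 : ℤ) ((0 : ℕ) : ℤ) = (∅ : Set ℤ) := by
        norm_num
      refine ⟨?_, fun i _ => rfl, ?_⟩
      · rw [hempty, hemptyZ]
        exact Set.bijOn_empty _
      · rintro ⟨i, j, k, hi, _⟩
        rw [hempty] at hi
        exact hi
    refine ⟨?_, ?_, ?_⟩
    · intro γ hγ
      have heqf : (fun i => if 1 ≤ i ∧ i ≤ 0 then perm231 0 γ i else 0) = fun _ => (0 : ℤ) := by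
        funext i
        rw [if_neg (by omega)]
      show (fun i => if 1 ≤ i ∧ i ≤ 0 then perm231 0 γ i else 0) ∈ Avoid231Set 0
      rw [heqf]
      exact hA
    · intro γ hγ γ' hγ' _
      funext x
      rw [hγ.2 x (by omega), hγ'.2 x (by omega)]
    · intro σ hσ
      refine ⟨fun _ => 0, ⟨⟨rfl, rfl, fun x _ => le_rfl, fun x hx => by omega⟩, fun _ _ => rfl⟩, ?_⟩
      funext i
      beta_reduce
      rw [if_neg (by omega)]
      exact (hσ.2.1 i (by rw [Set.mem_Icc]; omega)).symm
  -- inductive step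
  refine ⟨?_, ?_, ?_⟩
  · -- MapsTo
    intro γ hγ
    obtain ⟨m, γ₁, γ₂, hm1, hmn, h1, h2, rfl⟩ := dyck_split hn hγ
    show (fun i => if 1 ≤ i ∧ i ≤ n then perm231 n (glueP m γ₁ γ₂) i else 0) ∈ Avoid231Set n
    rw [Phi_glue hm1 hmn h1 h2]
    exact glueS_mem hm1 hmn ((IH (m - 1) (by omega)).1 h1) ((IH (n - m) (by omega)).1 h2)
  · -- InjOn
    intro γ hγ γ' hγ' heq
    obtain ⟨m, γ₁, γ₂, hm1, hmn, h1, h2, hge⟩ := dyck_split hn hγ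
    obtain ⟨m', γ₁', γ₂', hm1', hmn', h1', h2', hge'⟩ := dyck_split hn hγ'
    rw [hge, hge'] at heq
    have heqS : glueS m n (fun i => if 1 ≤ i ∧ i ≤ m - 1 then perm231 (m - 1) γ₁ i else 0)
          (fun i => if 1 ≤ i ∧ i ≤ n - m then perm231 (n - m) γ₂ i else 0)
        = glueS m' n (fun i => if 1 ≤ i ∧ i ≤ m' - 1 then perm231 (m' - 1) γ₁' i else 0)
          (fun i => if 1 ≤ i ∧ i ≤ n - m' then perm231 (n - m') γ₂' i else 0) := by
      rw [← Phi_glue hm1 hmn h1 h2, ← Phi_glue hm1' hmn' h1' h2']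
      exact heq
    -- m = m'
    have hmm : m = m' := by
      have h := congrFun heqS 1
      rw [glueS_one hn, glueS_one hn] at h
      omega
    subst hmm
    -- the f components agree
    have hf : (fun i => if 1 ≤ i ∧ i ≤ m - 1 then perm231 (m - 1) γ₁ i else 0)
        = (fun i => if 1 ≤ i ∧ i ≤ m - 1 then perm231 (m - 1) γ₁' i else 0) := by
      funext i
      by_cases hi : 1 ≤ i ∧ i ≤ m - 1
      · have h := congrFun heqS (i + 1)
        rw [glueS_at_mid _ _ (by omega) (by omega) hmn, glueS_at_mid _ _ (by omega) (by omega) hmn,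
          show i + 1 - 1 = i by omega] at h
        exact h
      · rw [if_neg hi, if_neg hi]
    have hg : (fun i => if 1 ≤ i ∧ i ≤ n - m then perm231 (n - m) γ₂ i else 0)
        = (fun i => if 1 ≤ i ∧ i ≤ n - m then perm231 (n - m) γ₂' i else 0) := by
      funext i
      by_cases hi : 1 ≤ i ∧ i ≤ n - m
      · have h := congrFun heqS (i + m)
        rw [glueS_at_high _ _ (by omega) (by omega) hm1, glueS_at_high _ _ (by omega) (by omega) hm1,
          show i + m - m = i by omega] at h
        exact add_right_cancel h
      · rw [if_neg hi, if_neg hi]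
    have e1 : γ₁ = γ₁' := (IH (m - 1) (by omega)).2.1 h1 h1' hf
    have e2 : γ₂ = γ₂' := (IH (n - m) (by omega)).2.1 h2 h2' hg
    rw [hge, hge', e1, e2]
  · -- SurjOn
    intro σ hσ
    obtain ⟨m, f, g, hm1, hmn, hfA, hgA, hσeq⟩ := perm_split hn hσ
    obtain ⟨γ₁, hγ₁D, hγ₁e⟩ := (IH (m - 1) (by omega)).2.2 hfA
    obtain ⟨γ₂, hγ₂D, hγ₂e⟩ := (IH (n - m) (by omega)).2.2 hgA
    refine ⟨glueP m γ₁ γ₂, glueP_mem hm1 hmn hγ₁D hγ₂D, ?_⟩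
    show (fun i => if 1 ≤ i ∧ i ≤ n then perm231 n (glueP m γ₁ γ₂) i else 0) = σ
    have hf' : (fun i => if 1 ≤ i ∧ i ≤ m - 1 then perm231 (m - 1) γ₁ i else 0) = f := hγ₁e
    have hg' : (fun i => if 1 ≤ i ∧ i ≤ n - m then perm231 (n - m) γ₂ i else 0) = g := hγ₂e
    rw [Phi_glue hm1 hmn hγ₁D hγ₂D, hσeq, hf', hg']
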